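/- Every balanced complex orthogonal design (BCOD) is, after a permutation of its rows, the direct sum of finitely many indecomposable BCODs. -/

import Mathlib

open Matrix

/-- A formal entry of a complex orthogonal design: either `0`, or `± z_i`, or `± z_i^*`.
Here `sign = true` means sign `+1`, and `conj = true` means the conjugated symbol `z_i^*`. -/
inductive CODEntry (k : ℕ) : Type where
  | zero : CODEntry k
  | var (sign : Bool) (conj : Bool) (idx : Fin k) : CODEntry k
deriving DecidableEq

namespace CODEntry

variable {k k' : ℕ}

/-- Evaluate a formal entry at an assignment of complex values to the indeterminates. -/
def eval (z : Fin k → ℂ) : CODEntry k → ℂ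
  | zero => 0
  | var s c i => (if s then (1 : ℂ) else -1) * (if c then (starRingEnd ℂ) (z i) else z i)

/-- Formal negation of an entry. -/
def neg : CODEntry k → CODEntry k
  | zero => zero
  | var s c i => var (!s) c i

/-- Formal conjugation of an entry (with `0^* = 0`). -/
def conj : CODEntry k → CODEntry k
  | zero => zero
  | var s c i => var s (!c) i

/-- Optionally negate an entry. -/
def negIf (b : Bool) (e : CODEntry k) : CODEntry k := if b then e.neg else e

/-- Rename variables according to a permutation of the indices. -/
def rename (σ : Equiv.Perm (Fin k)) : CODEntry k → CODEntry k
  | zero => zero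
  | var s c i => var s c (σ i)

/-- Negate all instances of the variable `z_j`. -/
def negVar (j : Fin k) : CODEntry k → CODEntry k
  | zero => zero
  | var s c i => if i = j then var (!s) c i else var s c i

/-- Conjugate all instances of the variable `z_j` (swap `z_j ↔ z_j^*`). -/
def conjVar (j : Fin k) : CODEntry k → CODEntry k
  | zero => zero
  | var s c i => if i = j then var s (!c) i else var s c i

/-- Transport an entry along a map of variable index sets. -/
def mapIdx (f : Fin k → Fin k') : CODEntry k → CODEntry k'
  | zero => zero
  | var s c i => var s c (f i)

/-- Whether a (nonzero) entry is a conjugated symbol `± z_i^*`. -/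
def isConj : CODEntry k → Bool
  | zero => false
  | var _ c _ => c

/-- The index of the variable occurring in an entry, if any. -/
def index : CODEntry k → Option (Fin k)
  | zero => none
  | var _ _ i => some i

end CODEntry

/-- `G` is a `[p, n, k]` complex orthogonal design (COD): for every assignment of complex
values to the indeterminates, `Gᴴ * G = (|z_1|² + … + |z_k|²) • I_n`. -/
def IsCOD {p n k : ℕ} (G : Matrix (Fin p) (Fin n) (CODEntry k)) : Prop :=
  ∀ z : Fin k → ℂ,
    (G.map (CODEntry.eval z))ᴴ * (G.map (CODEntry.eval z)) =
      ((∑ i, Complex.normSq (z i) : ℝ) : ℂ) • (1 : Matrix (Fin n) (Fin n) ℂ)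

/-- The equivalence operations on `[p, n, k]` CODs. -/
inductive EquivOp (p n k : ℕ) : Type where
  | rowPerm (σ : Equiv.Perm (Fin p))
  | rowNeg (r : Fin p)
  | colPerm (σ : Equiv.Perm (Fin n))
  | colNeg (c : Fin n)
  | varRename (σ : Equiv.Perm (Fin k))
  | varNeg (i : Fin k)
  | varConj (i : Fin k)

namespace EquivOp

variable {p n k : ℕ}

/-- Apply an equivalence operation to a matrix of formal entries. -/
def apply (G : Matrix (Fin p) (Fin n) (CODEntry k)) :
    EquivOp p n k → Matrix (Fin p) (Fin n) (CODEntry k)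
  | rowPerm σ => fun r c => G (σ r) c
  | rowNeg r₀ => fun r c => if r = r₀ then (G r c).neg else G r c
  | colPerm σ => fun r c => G r (σ c)
  | colNeg c₀ => fun r c => if c = c₀ then (G r c).neg else G r c
  | varRename σ => fun r c => (G r c).rename σ
  | varNeg i => fun r c => (G r c).negVar i
  | varConj i => fun r c => (G r c).conjVar i

/-- The operation is a column permutation. -/
def IsColPerm : EquivOp p n k → Prop
  | colPerm _ => True
  | _ => False

/-- The operation is a column negation. -/
def IsColNeg : EquivOp p n k → Prop
  | colNeg _ => True
  | _ => False

/-- The operation is a variable renaming. -/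
def IsVarRename : EquivOp p n k → Prop
  | varRename _ => True
  | _ => False

/-- Where each row of the original matrix is sent by the operation. -/
def rowMap : EquivOp p n k → Equiv.Perm (Fin p)
  | rowPerm σ => σ⁻¹
  | _ => 1

end EquivOp

/-- Apply a finite sequence of equivalence operations, in order. -/
def applyOps {p n k : ℕ} (G : Matrix (Fin p) (Fin n) (CODEntry k))
    (ops : List (EquivOp p n k)) : Matrix (Fin p) (Fin n) (CODEntry k) :=
  ops.foldl EquivOp.apply G

/-- Where each row of the original matrix is sent by a sequence of operations. -/
def opsRowMap {p n k : ℕ} (ops : List (EquivOp p n k)) : Equiv.Perm (Fin p) :=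
  ops.foldl (fun τ op => op.rowMap * τ) 1

/-- An operation on a COD with `m + m` columns is column-restricted if, in case it is a
column permutation, it is the transposition of columns `i` and `m + i` for some `i`. -/
def EquivOp.ColumnRestricted {p m k : ℕ} : EquivOp p (m + m) k → Prop
  | .colPerm σ => ∃ i : Fin m, σ = Equiv.swap (Fin.castAdd m i) (Fin.natAdd m i)
  | _ => True

/-- `G` contains the `B_i` form submatrix on the `2m` rows selected by the embedding `f`:
the block matrix `((z_i I_m, M), (−Mᴴ, z_i^* I_m))` where `M` is the top-right block. -/
def ContainsBFormWith {p m k : ℕ} (G : Matrix (Fin p) (Fin (m + m)) (CODEntry k))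
    (i : Fin k) (f : Fin (m + m) ↪ Fin p) : Prop :=
  (∀ r s : Fin m, G (f (Fin.castAdd m r)) (Fin.castAdd m s) =
      if r = s then CODEntry.var true false i else CODEntry.zero) ∧
  (∀ r s : Fin m, G (f (Fin.natAdd m r)) (Fin.natAdd m s) =
      if r = s then CODEntry.var true true i else CODEntry.zero) ∧
  (∀ r s : Fin m, G (f (Fin.natAdd m r)) (Fin.castAdd m s) =
      ((G (f (Fin.castAdd m s)) (Fin.natAdd m r)).conj).neg)

/-- As `ContainsBFormWith`, and moreover the top-right block `M` is (formally)
skew-symmetric: `Mᵀ = −M`. -/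
def ContainsSkewBFormWith {p m k : ℕ} (G : Matrix (Fin p) (Fin (m + m)) (CODEntry k))
    (i : Fin k) (f : Fin (m + m) ↪ Fin p) : Prop :=
  ContainsBFormWith G i f ∧
  ∀ r s : Fin m, G (f (Fin.castAdd m s)) (Fin.natAdd m r) =
    (G (f (Fin.castAdd m r)) (Fin.natAdd m s)).neg

/-- `G` is in `B_i` form: after equivalence operations excluding column permutations
(and not renaming variables), it contains the `B_i` form submatrix. -/
def InBForm {p m k : ℕ} (G : Matrix (Fin p) (Fin (m + m)) (CODEntry k)) (i : Fin k) : Prop :=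
  ∃ ops : List (EquivOp p (m + m) k),
    (∀ op ∈ ops, ¬ op.IsColPerm ∧ ¬ op.IsVarRename) ∧
    ∃ f, ContainsBFormWith (applyOps G ops) i f

/-- `G` is in `B_i` form with skew-symmetric block `M_i`. -/
def InSkewBForm {p m k : ℕ} (G : Matrix (Fin p) (Fin (m + m)) (CODEntry k)) (i : Fin k) : Prop :=
  ∃ ops : List (EquivOp p (m + m) k),
    (∀ op ∈ ops, ¬ op.IsColPerm ∧ ¬ op.IsVarRename) ∧
    ∃ f, ContainsSkewBFormWith (applyOps G ops) i f

/-- `G` is a balanced complex orthogonal design (BCOD) with `2m` columns: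
a COD in which every row has exactly `m` zero entries (hence `m` nonzero ones),
every row is conjugation-separated, and for each variable `z_j` it is in `B_j` form
with skew-symmetric block `M_j`. -/
def IsBCOD {p m k : ℕ} (G : Matrix (Fin p) (Fin (m + m)) (CODEntry k)) : Prop :=
  IsCOD G ∧
  (∀ r : Fin p, (Finset.univ.filter fun c => G r c = CODEntry.zero).card = m) ∧
  (∀ r : Fin p,
      (∀ c, G r c ≠ CODEntry.zero → (G r c).isConj = true) ∨
      (∀ c, G r c ≠ CODEntry.zero → (G r c).isConj = false)) ∧
  (∀ j : Fin k, InSkewBForm G j)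

/-- `G` is the direct sum of `G₁` (on top) and `G₂` (below), where `G₁` and `G₂` use
disjoint sets of indeterminates, embedded into `Fin k` via `ι₁` and `ι₂`. -/
def IsDirectSumOf {p n k p₁ p₂ k₁ k₂ : ℕ} (hp : p = p₁ + p₂)
    (G : Matrix (Fin p) (Fin n) (CODEntry k))
    (G₁ : Matrix (Fin p₁) (Fin n) (CODEntry k₁))
    (G₂ : Matrix (Fin p₂) (Fin n) (CODEntry k₂))
    (ι₁ : Fin k₁ ↪ Fin k) (ι₂ : Fin k₂ ↪ Fin k) : Prop :=
  k = k₁ + k₂ ∧ (∀ a b, ι₁ a ≠ ι₂ b) ∧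
  ∀ (r : Fin p) (c : Fin n),
    if h : (r : ℕ) < p₁ then G r c = (G₁ ⟨(r : ℕ), h⟩ c).mapIdx (fun i => ι₁ i)
    else G r c = (G₂ ⟨(r : ℕ) - p₁, by have := r.isLt; omega⟩ c).mapIdx (fun i => ι₂ i)

/-- A COD is decomposable if, after a permutation of its rows, it can be expressed as
the direct sum of two (nonempty) CODs on disjoint sets of indeterminates. -/
def IsDecomposable {p n k : ℕ} (G : Matrix (Fin p) (Fin n) (CODEntry k)) : Prop :=
  ∃ (σ : Equiv.Perm (Fin p)) (p₁ p₂ k₁ k₂ : ℕ) (hp : p = p₁ + p₂)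
    (G₁ : Matrix (Fin p₁) (Fin n) (CODEntry k₁))
    (G₂ : Matrix (Fin p₂) (Fin n) (CODEntry k₂))
    (ι₁ : Fin k₁ ↪ Fin k) (ι₂ : Fin k₂ ↪ Fin k),
    0 < p₁ ∧ 0 < p₂ ∧ IsCOD G₁ ∧ IsCOD G₂ ∧
    IsDirectSumOf hp (fun r c => G (σ r) c) G₁ G₂ ι₁ ι₂

/-- Rows `r₁` and `r₂` of `G` form a pair: if `r₁` is `(α₁,…,α_m, β₁,…,β_m)` then `r₂`
is `(±β₁^*,…,±β_m^*, ±α₁^*,…,±α_m^*)` (the signs may differ from entry to entry). -/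
def IsPairRows {p m k : ℕ} (G : Matrix (Fin p) (Fin (m + m)) (CODEntry k))
    (r₁ r₂ : Fin p) : Prop :=
  ∀ s : Fin m,
    (∃ b : Bool, G r₂ (Fin.castAdd m s) = CODEntry.negIf b ((G r₁ (Fin.natAdd m s)).conj)) ∧
    (∃ b : Bool, G r₂ (Fin.natAdd m s) = CODEntry.negIf b ((G r₁ (Fin.castAdd m s)).conj))

/-- `G` is (literally, with respect to its row order) the direct sum of finitely many
indecomposable BCODs, stacked from top to bottom. -/
inductive SumOfIndecomposableBCODs {m : ℕ} :
    {p k : ℕ} → Matrix (Fin p) (Fin (m + m)) (CODEntry k) → Prop where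
  | single {p k : ℕ} {G : Matrix (Fin p) (Fin (m + m)) (CODEntry k)}
      (h1 : IsBCOD G) (h2 : ¬ IsDecomposable G) : SumOfIndecomposableBCODs G
  | cons {p k p₁ p₂ k₁ k₂ : ℕ} (hp : p = p₁ + p₂)
      {G : Matrix (Fin p) (Fin (m + m)) (CODEntry k)}
      {G₁ : Matrix (Fin p₁) (Fin (m + m)) (CODEntry k₁)}
      {G₂ : Matrix (Fin p₂) (Fin (m + m)) (CODEntry k₂)}
      (ι₁ : Fin k₁ ↪ Fin k) (ι₂ : Fin k₂ ↪ Fin k)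
      (h1 : IsBCOD G₁) (h2 : ¬ IsDecomposable G₁)
      (hrest : SumOfIndecomposableBCODs G₂)
      (hsum : IsDirectSumOf hp G G₁ G₂ ι₁ ι₂) : SumOfIndecomposableBCODs G


/-! ### Auxiliary machinery -/

namespace CODEntry

variable {k k' : ℕ}

/-- Apply, per variable, an optional negation and optional conjugation. -/
def twist (t : Fin k → Bool × Bool) : CODEntry k → CODEntry k
  | .zero => .zero
  | .var s c i => .var (xor (t i).1 s) (xor (t i).2 c) i

@[simp] lemma twist_zero (t : Fin k → Bool × Bool) : twist t (zero : CODEntry k) = zero := rfl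

@[simp] lemma neg_neg (e : CODEntry k) : e.neg.neg = e := by cases e <;> simp [neg]

lemma negIf_negIf (x y : Bool) (e : CODEntry k) :
    negIf x (negIf y e) = negIf (xor x y) e := by
  cases x <;> cases y <;> simp [negIf]

lemma twist_id (e : CODEntry k) : twist (fun _ => (false, false)) e = e := by
  cases e <;> simp [twist]

lemma twist_congr {t t' : Fin k → Bool × Bool} (h : ∀ i, t i = t' i) (e : CODEntry k) :
    twist t e = twist t' e := by
  cases e <;> simp [twist, h]

lemma twist_neg (t : Fin k → Bool × Bool) (e : CODEntry k) :
    twist t e.neg = (twist t e).neg := by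
  cases e <;> simp [twist, neg, Bool.xor_not]

lemma twist_negIf (t : Fin k → Bool × Bool) (x : Bool) (e : CODEntry k) :
    twist t (negIf x e) = negIf x (twist t e) := by
  cases x <;> simp [negIf, twist_neg]

lemma negIf_comm (x y : Bool) (e : CODEntry k) :
    negIf x (negIf y e) = negIf y (negIf x e) := by
  rw [negIf_negIf, negIf_negIf, Bool.xor_comm]

lemma negIf_negIf_twist (x y z : Bool) (t : Fin k → Bool × Bool) (e : CODEntry k) :
    negIf x (negIf y (twist t (negIf z e))) = negIf (xor x z) (negIf y (twist t e)) := by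
  rw [twist_negIf, negIf_comm y, negIf_negIf]

lemma negIf_twist_inner (x y z : Bool) (t : Fin k → Bool × Bool) (e : CODEntry k) :
    negIf x (negIf y (twist t (negIf z e))) = negIf x (negIf (xor y z) (twist t e)) := by
  rw [twist_negIf, negIf_negIf y z]

lemma twist_negVar (t : Fin k → Bool × Bool) (i₀ : Fin k) (e : CODEntry k) :
    twist t (negVar i₀ e) =
      twist (fun i => (xor (t i).1 (decide (i = i₀)), (t i).2)) e := by
  cases e with
  | zero => rfl
  | var s c i =>
    by_cases h : i = i₀ <;> simp [twist, negVar, h, Bool.xor_not, Bool.xor_assoc]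

lemma twist_conjVar (t : Fin k → Bool × Bool) (i₀ : Fin k) (e : CODEntry k) :
    twist t (conjVar i₀ e) =
      twist (fun i => ((t i).1, xor (t i).2 (decide (i = i₀)))) e := by
  cases e with
  | zero => rfl
  | var s c i =>
    by_cases h : i = i₀ <;> simp [twist, conjVar, h, Bool.xor_not, Bool.xor_assoc]

lemma twist_twist (t t' : Fin k → Bool × Bool) (e : CODEntry k) :
    twist t (twist t' e) =
      twist (fun i => (xor (t i).1 (t' i).1, xor (t i).2 (t' i).2)) e := by
  cases e <;> simp [twist, Bool.xor_assoc]

@[simp] lemma mapIdx_zero (f : Fin k → Fin k') : mapIdx f (zero : CODEntry k) = zero := rfl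

lemma mapIdx_neg (f : Fin k → Fin k') (e : CODEntry k) :
    mapIdx f e.neg = (mapIdx f e).neg := by cases e <;> rfl

lemma mapIdx_conj (f : Fin k → Fin k') (e : CODEntry k) :
    mapIdx f e.conj = (mapIdx f e).conj := by cases e <;> rfl

lemma mapIdx_negIf (f : Fin k → Fin k') (x : Bool) (e : CODEntry k) :
    mapIdx f (negIf x e) = negIf x (mapIdx f e) := by
  cases x <;> simp [negIf, mapIdx_neg]

lemma mapIdx_injective {f : Fin k → Fin k'} (hf : Function.Injective f) :
    Function.Injective (mapIdx f) := by
  intro a b hab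
  cases a <;> cases b <;> simp_all [mapIdx]
  exact hf hab.2.2

lemma twist_mapIdx (t : Fin k' → Bool × Bool) (f : Fin k → Fin k') (e : CODEntry k) :
    twist t (mapIdx f e) = mapIdx f (twist (fun i => t (f i)) e) := by
  cases e <;> rfl

@[simp] lemma mapIdx_eq_zero_iff (f : Fin k → Fin k') (e : CODEntry k) :
    mapIdx f e = zero ↔ e = zero := by cases e <;> simp [mapIdx]

@[simp] lemma isConj_mapIdx (f : Fin k → Fin k') (e : CODEntry k) :
    (mapIdx f e).isConj = e.isConj := by cases e <;> rfl

@[simp] lemma index_neg (e : CODEntry k) : e.neg.index = e.index := by cases e <;> rfl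

@[simp] lemma index_negIf (x : Bool) (e : CODEntry k) : (negIf x e).index = e.index := by
  cases x <;> simp [negIf]

@[simp] lemma index_twist (t : Fin k → Bool × Bool) (e : CODEntry k) :
    (twist t e).index = e.index := by cases e <;> rfl

lemma index_mapIdx (f : Fin k → Fin k') (e : CODEntry k) :
    (mapIdx f e).index = e.index.map f := by cases e <;> rfl

end CODEntry

section NormalForm

open CODEntry

variable {p n k : ℕ}

lemma applyOps_cons (G : Matrix (Fin p) (Fin n) (CODEntry k)) (op : EquivOp p n k)
    (ops : List (EquivOp p n k)) :
    applyOps G (op :: ops) = applyOps (op.apply G) ops := rfl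

lemma applyOps_append (G : Matrix (Fin p) (Fin n) (CODEntry k))
    (l₁ l₂ : List (EquivOp p n k)) :
    applyOps G (l₁ ++ l₂) = applyOps (applyOps G l₁) l₂ := List.foldl_append ..

/-- Normal form for a sequence of operations that excludes column permutations and
variable renamings. -/
lemma applyOps_normal_form :
    ∀ (ops : List (EquivOp p n k)), (∀ op ∈ ops, ¬ op.IsColPerm ∧ ¬ op.IsVarRename) →
    ∀ (G : Matrix (Fin p) (Fin n) (CODEntry k)),
    ∃ (π : Equiv.Perm (Fin p)) (a : Fin p → Bool) (b : Fin n → Bool)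
      (t : Fin k → Bool × Bool),
      ∀ r c, applyOps G ops r c = negIf (a r) (negIf (b c) (twist t (G (π r) c)))
  | [], _, G => ⟨1, fun _ => false, fun _ => false, fun _ => (false, false), by
      intro r c; simp [applyOps, negIf, twist_id]⟩
  | op :: ops, hops, G => by
    have hops' : ∀ o ∈ ops, ¬ o.IsColPerm ∧ ¬ o.IsVarRename :=
      fun o ho => hops o (List.mem_cons_of_mem _ ho)
    obtain ⟨π, a, b, t, h⟩ := applyOps_normal_form ops hops' (op.apply G)
    rw [show applyOps G (op :: ops) = applyOps (op.apply G) ops from rfl]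
    cases op with
    | rowPerm σ =>
      exact ⟨π.trans σ, a, b, t, fun r c => h r c⟩
    | rowNeg r₀ =>
      refine ⟨π, fun r => xor (a r) (decide (π r = r₀)), b, t, fun r c => ?_⟩
      rw [h r c]
      show negIf _ (negIf _ (twist t (if π r = r₀ then (G (π r) c).neg else G (π r) c))) = _
      by_cases hr : π r = r₀
      · rw [if_pos hr, show (G (π r) c).neg = negIf true (G (π r) c) from rfl,
          negIf_negIf_twist]
        simp [hr]
      · rw [if_neg hr]; simp [hr]
    | colPerm σ => exact absurd trivial (hops _ (List.mem_cons_self ..)).1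
    | colNeg c₀ =>
      refine ⟨π, a, fun c => xor (b c) (decide (c = c₀)), t, fun r c => ?_⟩
      rw [h r c]
      show negIf _ (negIf _ (twist t (if c = c₀ then (G (π r) c).neg else G (π r) c))) = _
      by_cases hc : c = c₀
      · rw [if_pos hc, show (G (π r) c).neg = negIf true (G (π r) c) from rfl,
          negIf_twist_inner]
        simp [hc]
      · rw [if_neg hc]; simp [hc]
    | varRename σ => exact absurd trivial (hops _ (List.mem_cons_self ..)).2
    | varNeg i₀ =>
      refine ⟨π, a, b, fun i => (xor (t i).1 (decide (i = i₀)), (t i).2), fun r c => ?_⟩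
      rw [h r c]
      show negIf _ (negIf _ (twist t (negVar i₀ (G (π r) c)))) = _
      rw [twist_negVar]
    | varConj i₀ =>
      refine ⟨π, a, b, fun i => ((t i).1, xor (t i).2 (decide (i = i₀))), fun r c => ?_⟩
      rw [h r c]
      show negIf _ (negIf _ (twist t (conjVar i₀ (G (π r) c)))) = _
      rw [twist_conjVar]

lemma applyOps_rowNegs (L : List (Fin p)) (hL : L.Nodup)
    (G : Matrix (Fin p) (Fin n) (CODEntry k)) :
    applyOps G (L.map EquivOp.rowNeg) = fun r c => negIf (decide (r ∈ L)) (G r c) := by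
  induction L generalizing G with
  | nil => funext r c; simp [applyOps, negIf]
  | cons r₀ L ih =>
    rw [List.map_cons, applyOps_cons, ih (List.nodup_cons.mp hL).2]
    funext r c
    show negIf _ ((EquivOp.rowNeg r₀).apply G r c) = _
    show negIf _ (if r = r₀ then (G r c).neg else G r c) = _
    by_cases hr : r = r₀
    · have hrL : r ∉ L := hr ▸ (List.nodup_cons.mp hL).1
      rw [if_pos hr, decide_eq_false hrL,
        decide_eq_true (by simp [hr] : r ∈ r₀ :: L)]
      rfl
    · rw [if_neg hr]
      simp [List.mem_cons, hr]

lemma applyOps_colNegs (L : List (Fin n)) (hL : L.Nodup)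
    (G : Matrix (Fin p) (Fin n) (CODEntry k)) :
    applyOps G (L.map EquivOp.colNeg) = fun r c => negIf (decide (c ∈ L)) (G r c) := by
  induction L generalizing G with
  | nil => funext r c; simp [applyOps, negIf]
  | cons c₀ L ih =>
    rw [List.map_cons, applyOps_cons, ih (List.nodup_cons.mp hL).2]
    funext r c
    show negIf _ ((EquivOp.colNeg c₀).apply G r c) = _
    show negIf _ (if c = c₀ then (G r c).neg else G r c) = _
    by_cases hc : c = c₀
    · have hcL : c ∉ L := hc ▸ (List.nodup_cons.mp hL).1
      rw [if_pos hc, decide_eq_false hcL,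
        decide_eq_true (by simp [hc] : c ∈ c₀ :: L)]
      rfl
    · rw [if_neg hc]
      simp [List.mem_cons, hc]

lemma applyOps_varNegs (L : List (Fin k)) (hL : L.Nodup)
    (G : Matrix (Fin p) (Fin n) (CODEntry k)) :
    applyOps G (L.map EquivOp.varNeg) =
      fun r c => twist (fun i => (decide (i ∈ L), false)) (G r c) := by
  induction L generalizing G with
  | nil => funext r c; simp [applyOps, twist_id]
  | cons i₀ L ih =>
    rw [List.map_cons, applyOps_cons, ih (List.nodup_cons.mp hL).2]
    funext r c
    show twist _ ((EquivOp.varNeg i₀).apply G r c) = _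
    show twist _ (negVar i₀ (G r c)) = _
    rw [twist_negVar]
    refine twist_congr (fun i => ?_) _
    by_cases hi : i = i₀
    · subst hi
      have hiL : i ∉ L := (List.nodup_cons.mp hL).1
      simp [hiL, List.mem_cons]
    · simp [hi, List.mem_cons]

lemma applyOps_varConjs (L : List (Fin k)) (hL : L.Nodup)
    (G : Matrix (Fin p) (Fin n) (CODEntry k)) :
    applyOps G (L.map EquivOp.varConj) =
      fun r c => twist (fun i => (false, decide (i ∈ L))) (G r c) := by
  induction L generalizing G with
  | nil => funext r c; simp [applyOps, twist_id]
  | cons i₀ L ih =>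
    rw [List.map_cons, applyOps_cons, ih (List.nodup_cons.mp hL).2]
    funext r c
    show twist _ ((EquivOp.varConj i₀).apply G r c) = _
    show twist _ (conjVar i₀ (G r c)) = _
    rw [twist_conjVar]
    refine twist_congr (fun i => ?_) _
    by_cases hi : i = i₀
    · subst hi
      have hiL : i ∉ L := (List.nodup_cons.mp hL).1
      simp [hiL, List.mem_cons]
    · simp [hi, List.mem_cons]

/-- Conversely, every normal-form transform (without row permutation) is realized by a
sequence of allowed operations. -/
lemma exists_ops_of_normal_form (a : Fin p → Bool) (b : Fin n → Bool)
    (t : Fin k → Bool × Bool) :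
    ∃ ops : List (EquivOp p n k),
      (∀ op ∈ ops, ¬ op.IsColPerm ∧ ¬ op.IsVarRename) ∧
      ∀ (G : Matrix (Fin p) (Fin n) (CODEntry k)) r c,
        applyOps G ops r c = negIf (a r) (negIf (b c) (twist t (G r c))) := by
  classical
  refine ⟨((List.finRange p).filter fun r => a r).map EquivOp.rowNeg ++
      (((List.finRange n).filter fun c => b c).map EquivOp.colNeg ++
      (((List.finRange k).filter fun i => (t i).1).map EquivOp.varNeg ++
       ((List.finRange k).filter fun i => (t i).2).map EquivOp.varConj)), ?_, ?_⟩
  · intro op hop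
    simp only [List.mem_append, List.mem_map] at hop
    rcases hop with ⟨r, _, rfl⟩ | ⟨c, _, rfl⟩ | ⟨i, _, rfl⟩ | ⟨i, _, rfl⟩ <;>
      exact ⟨fun h => h, fun h => h⟩
  · intro G r c
    rw [applyOps_append, applyOps_append, applyOps_append]
    erw [applyOps_rowNegs _ (List.Nodup.filter _ (List.nodup_finRange p)),
      applyOps_colNegs _ (List.Nodup.filter _ (List.nodup_finRange n)),
      applyOps_varNegs _ (List.Nodup.filter _ (List.nodup_finRange k)),
      applyOps_varConjs _ (List.Nodup.filter _ (List.nodup_finRange k))]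
    dsimp only
    rw [twist_twist, twist_negIf, twist_negIf, negIf_comm]
    congr 1
    · simp [List.mem_filter]
    congr 1
    · simp [List.mem_filter]
    refine twist_congr (fun i => ?_) _
    simp [List.mem_filter]

end NormalForm


section Transfer

open CODEntry

/-- `InSkewBForm` transfers from a matrix to a direct summand. -/
lemma InSkewBForm.transfer {p m k q ks : ℕ}
    {G' : Matrix (Fin p) (Fin (m + m)) (CODEntry k)}
    {Gs : Matrix (Fin q) (Fin (m + m)) (CODEntry ks)}
    (ι : Fin ks ↪ Fin k) (ρ : Fin q ↪ Fin p) (j : Fin ks)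
    (hρ : ∀ u c, G' (ρ u) c = (Gs u c).mapIdx ι)
    (hrow : ∀ r c, (G' r c).index = some (ι j) → ∃ u, ρ u = r)
    (h : InSkewBForm G' (ι j)) : InSkewBForm Gs j := by
  classical
  obtain ⟨ops, hops, f, hB⟩ := h
  obtain ⟨π, a, b, t, hnf⟩ := applyOps_normal_form ops hops G'
  have hidx : ∀ u : Fin (m + m), ∃ c, (G' (π (f u)) c).index = some (ι j) := by
    intro u
    refine Fin.addCases (fun r => ?_) (fun r => ?_) u
    · refine ⟨Fin.castAdd m r, ?_⟩
      have h2 := (hnf (f (Fin.castAdd m r)) (Fin.castAdd m r)).symm.trans (hB.1.1 r r)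
      rw [if_pos rfl] at h2
      have h3 := congrArg CODEntry.index h2
      rw [index_negIf, index_negIf, index_twist] at h3
      exact h3
    · refine ⟨Fin.natAdd m r, ?_⟩
      have h2 := (hnf (f (Fin.natAdd m r)) (Fin.natAdd m r)).symm.trans (hB.1.2.1 r r)
      rw [if_pos rfl] at h2
      have h3 := congrArg CODEntry.index h2
      rw [index_negIf, index_negIf, index_twist] at h3
      exact h3
  have hsel : ∀ u : Fin (m + m), ∃ v : Fin q, ρ v = π (f u) := by
    intro u
    obtain ⟨c, hc⟩ := hidx u
    exact hrow _ c hc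
  choose f1 hf1 using hsel
  have hf1inj : Function.Injective f1 := by
    intro u v huv
    have : π (f u) = π (f v) := by rw [← hf1, ← hf1, huv]
    exact f.injective (π.injective this)
  set a1 : Fin q → Bool :=
    fun v => if h : ∃ u, f1 u = v then a (f h.choose) else false with ha1def
  have ha1 : ∀ u, a1 (f1 u) = a (f u) := by
    intro u
    have hex : ∃ u', f1 u' = f1 u := ⟨u, rfl⟩
    rw [ha1def]
    dsimp only
    rw [dif_pos hex, hf1inj hex.choose_spec]
  obtain ⟨ops₁, hops₁, hops₁eq⟩ :=
    exists_ops_of_normal_form (p := q) (n := m + m) a1 b (fun i => t (ι i))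
  have key2 : ∀ u c, applyOps G' ops (f u) c = mapIdx ι (applyOps Gs ops₁ (f1 u) c) := by
    intro u c
    rw [hnf, ← hf1 u, hρ, twist_mapIdx, ← mapIdx_negIf, ← mapIdx_negIf,
      hops₁eq, ha1]
  refine ⟨ops₁, hops₁, ⟨f1, hf1inj⟩, ⟨⟨?_, ?_, ?_⟩, ?_⟩⟩
  · intro r s
    simp only [Function.Embedding.coeFn_mk]
    refine mapIdx_injective ι.injective ?_
    rw [← key2, hB.1.1 r s]
    split <;> rfl
  · intro r s
    simp only [Function.Embedding.coeFn_mk]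
    refine mapIdx_injective ι.injective ?_
    rw [← key2, hB.1.2.1 r s]
    split <;> rfl
  · intro r s
    simp only [Function.Embedding.coeFn_mk]
    refine mapIdx_injective ι.injective ?_
    rw [mapIdx_neg, mapIdx_conj, ← key2, ← key2]
    exact hB.1.2.2 r s
  · intro r s
    simp only [Function.Embedding.coeFn_mk]
    refine mapIdx_injective ι.injective ?_
    rw [mapIdx_neg, ← key2, ← key2]
    exact hB.2 r s

lemma IsCOD.rowPerm {p n k : ℕ} {G : Matrix (Fin p) (Fin n) (CODEntry k)}
    (h : IsCOD G) (σ : Equiv.Perm (Fin p)) : IsCOD (fun r c => G (σ r) c) := by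
  intro z
  rw [← h z]
  ext i j
  simp only [Matrix.mul_apply, Matrix.conjTranspose_apply, Matrix.map_apply]
  exact Fintype.sum_equiv σ _ _ (fun r => rfl)

lemma IsBCOD.rowPerm {p m k : ℕ} {G : Matrix (Fin p) (Fin (m + m)) (CODEntry k)}
    (h : IsBCOD G) (σ : Equiv.Perm (Fin p)) : IsBCOD (fun r c => G (σ r) c) := by
  obtain ⟨h1, h2, h3, h4⟩ := h
  refine ⟨h1.rowPerm σ, fun r => h2 (σ r), fun r => h3 (σ r), fun j => ?_⟩
  obtain ⟨ops, hops, f, hB⟩ := h4 j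
  refine ⟨EquivOp.rowPerm σ⁻¹ :: ops, ?_, f, ?_⟩
  · intro op hop
    rcases List.mem_cons.mp hop with rfl | hop
    · exact ⟨fun h => h, fun h => h⟩
    · exact hops op hop
  · have hr : EquivOp.apply (fun r c => G (σ r) c) (EquivOp.rowPerm σ⁻¹) = G := by
      funext r c
      show G (σ (σ⁻¹ r)) c = G r c
      exact congrArg (fun x => G x c) (σ.apply_symm_apply r)
    erw [applyOps_cons, hr]
    exact hB

/-- A direct summand of a BCOD, which is itself a COD, is a BCOD. -/
lemma IsBCOD.component {p m k q ks : ℕ} {G' : Matrix (Fin p) (Fin (m + m)) (CODEntry k)}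
    {Gs : Matrix (Fin q) (Fin (m + m)) (CODEntry ks)}
    (ι : Fin ks ↪ Fin k) (ρ : Fin q ↪ Fin p)
    (hρ : ∀ u c, G' (ρ u) c = (Gs u c).mapIdx ι)
    (hout : ∀ r, (¬ ∃ u, ρ u = r) → ∀ c i, (G' r c).index = some i → i ∉ Set.range ι)
    (hG' : IsBCOD G') (hCOD : IsCOD Gs) : IsBCOD Gs := by
  refine ⟨hCOD, ?_, ?_, ?_⟩
  · intro u
    have hset : (Finset.univ.filter fun c => Gs u c = CODEntry.zero) =
        (Finset.univ.filter fun c => G' (ρ u) c = CODEntry.zero) := by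
      apply Finset.filter_congr
      intro c _
      simp [hρ]
    rw [hset]
    exact hG'.2.1 (ρ u)
  · intro u
    rcases hG'.2.2.1 (ρ u) with h | h
    · left
      intro c hc
      have hnz : G' (ρ u) c ≠ CODEntry.zero := by rw [hρ]; simpa using hc
      have := h c hnz
      rw [hρ] at this
      simpa using this
    · right
      intro c hc
      have hnz : G' (ρ u) c ≠ CODEntry.zero := by rw [hρ]; simpa using hc
      have := h c hnz
      rw [hρ] at this
      simpa using this
  · intro j
    refine InSkewBForm.transfer ι ρ j hρ ?_ (hG'.2.2.2 (ι j))
    intro r c hidxeq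
    by_contra hno
    exact hout r hno c _ hidxeq ⟨j, rfl⟩

end Transfer


section Combine

open CODEntry

namespace CODEntry

lemma mapIdx_mapIdx {k k' k'' : ℕ} (f : Fin k' → Fin k'') (g : Fin k → Fin k')
    (e : CODEntry k) : mapIdx f (mapIdx g e) = mapIdx (fun i => f (g i)) e := by
  cases e <;> rfl

lemma mapIdx_congr {k k' : ℕ} {f g : Fin k → Fin k'} (h : ∀ i, f i = g i)
    (e : CODEntry k) : mapIdx f e = mapIdx g e := by
  cases e <;> simp [mapIdx, h]

end CODEntry

lemma IsDirectSumOf.apply_lt {p n k p₁ p₂ k₁ k₂ : ℕ} {hp : p = p₁ + p₂}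
    {G : Matrix (Fin p) (Fin n) (CODEntry k)}
    {G₁ : Matrix (Fin p₁) (Fin n) (CODEntry k₁)}
    {G₂ : Matrix (Fin p₂) (Fin n) (CODEntry k₂)}
    {ι₁ : Fin k₁ ↪ Fin k} {ι₂ : Fin k₂ ↪ Fin k}
    (h : IsDirectSumOf hp G G₁ G₂ ι₁ ι₂) (r : Fin p) (c : Fin n)
    (hr : (r : ℕ) < p₁) :
    G r c = (G₁ ⟨(r : ℕ), hr⟩ c).mapIdx (fun i => ι₁ i) := by
  have h5 := h.2.2 r c
  split at h5
  · exact h5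
  · omega

lemma IsDirectSumOf.apply_ge {p n k p₁ p₂ k₁ k₂ : ℕ} {hp : p = p₁ + p₂}
    {G : Matrix (Fin p) (Fin n) (CODEntry k)}
    {G₁ : Matrix (Fin p₁) (Fin n) (CODEntry k₁)}
    {G₂ : Matrix (Fin p₂) (Fin n) (CODEntry k₂)}
    {ι₁ : Fin k₁ ↪ Fin k} {ι₂ : Fin k₂ ↪ Fin k}
    (h : IsDirectSumOf hp G G₁ G₂ ι₁ ι₂) (r : Fin p) (c : Fin n)
    (hr : ¬ (r : ℕ) < p₁) :
    G r c = (G₂ ⟨(r : ℕ) - p₁, by have := r.isLt; omega⟩ c).mapIdx (fun i => ι₂ i) := by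
  have h5 := h.2.2 r c
  split at h5
  · omega
  · exact h5

/-- The literal stacking of two formal matrices on disjoint variable sets. -/
def stackSum {p₁ p₂ n k₁ k₂ : ℕ} (A : Matrix (Fin p₁) (Fin n) (CODEntry k₁))
    (B : Matrix (Fin p₂) (Fin n) (CODEntry k₂)) :
    Matrix (Fin (p₁ + p₂)) (Fin n) (CODEntry (k₁ + k₂)) := fun r c =>
  if h : (r : ℕ) < p₁ then (A ⟨(r : ℕ), h⟩ c).mapIdx (Fin.castAdd k₂)
  else (B ⟨(r : ℕ) - p₁, by have := r.isLt; omega⟩ c).mapIdx (Fin.natAdd k₁)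

def embCast (k₁ k₂ : ℕ) : Fin k₁ ↪ Fin (k₁ + k₂) :=
  ⟨Fin.castAdd k₂, fun x y hxy => by
    apply Fin.ext
    simpa using congrArg Fin.val hxy⟩

def embNat (k₁ k₂ : ℕ) : Fin k₂ ↪ Fin (k₁ + k₂) :=
  ⟨Fin.natAdd k₁, fun x y hxy => by
    apply Fin.ext
    have := congrArg Fin.val hxy
    simp only [Fin.coe_natAdd] at this
    omega⟩

lemma isDirectSumOf_stackSum {p₁ p₂ n k₁ k₂ : ℕ}
    (A : Matrix (Fin p₁) (Fin n) (CODEntry k₁))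
    (B : Matrix (Fin p₂) (Fin n) (CODEntry k₂)) :
    IsDirectSumOf rfl (stackSum A B) A B (embCast k₁ k₂) (embNat k₁ k₂) := by
  refine ⟨rfl, ?_, ?_⟩
  · intro a b h
    have h2 := congrArg Fin.val (show Fin.castAdd k₂ a = Fin.natAdd k₁ b from h)
    simp only [embCast, embNat, Function.Embedding.coeFn_mk, Fin.coe_castAdd,
      Fin.coe_natAdd] at h2
    have := a.isLt
    omega
  · intro r c
    split
    · next h =>
      unfold stackSum
      rw [dif_pos h]
      rfl
    · next h =>
      unfold stackSum
      rw [dif_neg h]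
      rfl

lemma SumOfIndecomposableBCODs.combine {m : ℕ} {pa ka : ℕ}
    {A : Matrix (Fin pa) (Fin (m + m)) (CODEntry ka)}
    (hA : SumOfIndecomposableBCODs A) :
    ∀ {pb kb : ℕ} {B : Matrix (Fin pb) (Fin (m + m)) (CODEntry kb)},
      SumOfIndecomposableBCODs B →
      ∀ {p k : ℕ} (hp : p = pa + pb) (G : Matrix (Fin p) (Fin (m + m)) (CODEntry k))
        (ι₁ : Fin ka ↪ Fin k) (ι₂ : Fin kb ↪ Fin k),
        IsDirectSumOf hp G A B ι₁ ι₂ → SumOfIndecomposableBCODs G := by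
  induction hA with
  | single h1 h2 =>
    intro pb kb B hB p k hp G ι₁ ι₂ hsum
    exact .cons hp ι₁ ι₂ h1 h2 hB hsum
  | @cons pa ka q₁ q₂ l₁ l₂ hpa A A₁ A₂ j₁ j₂ h1 h2 hA₂ hsumA ih =>
    intro pb kb B hB p k hp G ι₁ ι₂ hsum
    have hSH : SumOfIndecomposableBCODs (stackSum A₂ B) :=
      ih hB rfl _ _ _ (isDirectSumOf_stackSum A₂ B)
    have hka : ka = l₁ + l₂ := hsumA.1
    have hdisjA : ∀ a b, j₁ a ≠ j₂ b := hsumA.2.1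
    have hdisj : ∀ a b, ι₁ a ≠ ι₂ b := hsum.2.1
    have hk : k = ka + kb := hsum.1
    set em : Fin (l₂ + kb) → Fin k := fun i =>
      if h : (i : ℕ) < l₂ then ι₁ (j₂ ⟨(i : ℕ), h⟩)
      else ι₂ ⟨(i : ℕ) - l₂, by have := i.isLt; omega⟩ with hem
    have heminj : Function.Injective em := by
      intro x y hxy
      rw [hem] at hxy
      dsimp only at hxy
      by_cases hx : (x : ℕ) < l₂ <;> by_cases hy : (y : ℕ) < l₂
      · rw [dif_pos hx, dif_pos hy] at hxy
        have h5 := congrArg Fin.val (j₂.injective (ι₁.injective hxy))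
        exact Fin.ext (by simpa using h5)
      · rw [dif_pos hx, dif_neg hy] at hxy
        exact absurd hxy (hdisj _ _)
      · rw [dif_neg hx, dif_pos hy] at hxy
        exact absurd hxy.symm (hdisj _ _)
      · rw [dif_neg hx, dif_neg hy] at hxy
        have h5 := congrArg Fin.val (ι₂.injective hxy)
        simp only at h5
        exact Fin.ext (by omega)
    have hem_cast : ∀ i : Fin l₂, em (Fin.castAdd kb i) = ι₁ (j₂ i) := by
      intro i
      rw [hem]
      dsimp only
      rw [dif_pos (show ((Fin.castAdd kb i : Fin (l₂ + kb)) : ℕ) < l₂ from i.isLt)]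
      exact congrArg ι₁ (congrArg j₂ (Fin.ext (by simp)))
    have hem_nat : ∀ i : Fin kb, em (Fin.natAdd l₂ i) = ι₂ i := by
      intro i
      rw [hem]
      dsimp only
      rw [dif_neg (show ¬ ((Fin.natAdd l₂ i : Fin (l₂ + kb)) : ℕ) < l₂ by
        simp [Fin.coe_natAdd])]
      exact congrArg ι₂ (Fin.ext (by simp))
    refine SumOfIndecomposableBCODs.cons (by omega) (j₁.trans ι₁) ⟨em, heminj⟩
      h1 h2 hSH ⟨by omega, ?_, ?_⟩
    · intro a b
      rw [Function.Embedding.trans_apply]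
      show ι₁ (j₁ a) ≠ em b
      rw [hem]
      dsimp only
      by_cases hblt : (b : ℕ) < l₂
      · rw [dif_pos hblt]
        intro hcontra
        exact hdisjA a _ (ι₁.injective hcontra)
      · rw [dif_neg hblt]
        exact hdisj _ _
    · intro r c
      split
      · next hr1 =>
        have hrpa : (r : ℕ) < pa := by omega
        rw [hsum.apply_lt r c hrpa,
          hsumA.apply_lt ⟨(r : ℕ), hrpa⟩ c hr1, CODEntry.mapIdx_mapIdx]
        rfl
      · next hr1 =>
        by_cases hrpa : (r : ℕ) < pa
        · have hq2 : (r : ℕ) - q₁ < q₂ := by omega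
          rw [hsum.apply_lt r c hrpa, hsumA.apply_ge ⟨(r : ℕ), hrpa⟩ c hr1,
            CODEntry.mapIdx_mapIdx]
          have hst : stackSum A₂ B ⟨(r : ℕ) - q₁, by have := r.isLt; omega⟩ c =
              (A₂ ⟨(r : ℕ) - q₁, hq2⟩ c).mapIdx (Fin.castAdd kb) := by
            show (if h : _ then _ else _) = _
            rw [dif_pos hq2]
          rw [hst, CODEntry.mapIdx_mapIdx]
          exact CODEntry.mapIdx_congr (fun i => (hem_cast i).symm) _
        · have hq2' : ¬ ((r : ℕ) - q₁ < q₂) := by omega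
          have hst : stackSum A₂ B ⟨(r : ℕ) - q₁, by have := r.isLt; omega⟩ c =
              (B ⟨(r : ℕ) - q₁ - q₂, by have := r.isLt; omega⟩ c).mapIdx
                (Fin.natAdd l₂) := by
            show (if h : _ then _ else _) = _
            rw [dif_neg hq2']
          rw [hsum.apply_ge r c hrpa, hst, CODEntry.mapIdx_mapIdx]
          have hBentry : (B ⟨(r : ℕ) - q₁ - q₂, by have := r.isLt; omega⟩ c) =
              (B ⟨(r : ℕ) - pa, by have := r.isLt; omega⟩ c) :=
            congrArg (fun x => B x c) (Fin.ext (by simp; omega))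
          rw [hBentry]
          exact CODEntry.mapIdx_congr (fun i => (hem_nat i).symm) _

end Combine

section Main

lemma bcod_aux {m : ℕ} :
    ∀ (p : ℕ) {k : ℕ} (G : Matrix (Fin p) (Fin (m + m)) (CODEntry k)), IsBCOD G →
      ∃ σ : Equiv.Perm (Fin p), SumOfIndecomposableBCODs (fun r c => G (σ r) c) := by
  intro p
  induction p using Nat.strong_induction_on with
  | _ p ih =>
    intro k G hG
    by_cases hdec : IsDecomposable G
    · obtain ⟨σ, p₁, p₂, k₁, k₂, hp, G₁, G₂, ι₁, ι₂, hp₁, hp₂, hc₁, hc₂, hsum⟩ := hdec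
      subst hp
      have hG'b : IsBCOD (fun r c => G (σ r) c) := hG.rowPerm σ
      set G' : Matrix (Fin (p₁ + p₂)) (Fin (m + m)) (CODEntry k) :=
        fun r c => G (σ r) c with hG'def
      set ρ₁ : Fin p₁ ↪ Fin (p₁ + p₂) :=
        ⟨fun u => ⟨(u : ℕ), by omega⟩, fun x y hxy => by
          apply Fin.ext
          simpa using congrArg Fin.val hxy⟩ with hρ₁def
      set ρ₂ : Fin p₂ ↪ Fin (p₁ + p₂) :=
        ⟨fun u => ⟨p₁ + (u : ℕ), by omega⟩, fun x y hxy => by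
          apply Fin.ext
          have := congrArg Fin.val hxy
          simp only at this
          omega⟩ with hρ₂def
      have hρ₁ : ∀ u c, G' (ρ₁ u) c = (G₁ u c).mapIdx ι₁ := by
        intro u c
        rw [hsum.apply_lt (ρ₁ u) c (show ((ρ₁ u : Fin _) : ℕ) < p₁ from u.isLt)]
        rfl
      have hρ₂ : ∀ u c, G' (ρ₂ u) c = (G₂ u c).mapIdx ι₂ := by
        intro u c
        rw [hsum.apply_ge (ρ₂ u) c (show ¬ ((ρ₂ u : Fin _) : ℕ) < p₁ by
          show ¬ p₁ + (u : ℕ) < p₁; omega)]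
        exact congrArg (fun e => CODEntry.mapIdx (fun i => ι₂ i) e)
          (congrArg (fun x => G₂ x c) (Fin.ext (by show p₁ + (u : ℕ) - p₁ = (u : ℕ); omega)))
      have hout₁ : ∀ r, (¬ ∃ u, ρ₁ u = r) → ∀ c i, (G' r c).index = some i →
          i ∉ Set.range ι₁ := by
        intro r hr c i hidx
        have hge : ¬ ((r : ℕ) < p₁) := fun hlt => hr ⟨⟨(r : ℕ), hlt⟩, Fin.ext rfl⟩
        rw [hsum.apply_ge r c hge, CODEntry.index_mapIdx] at hidx
        rintro ⟨j', rfl⟩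
        cases hmem : (G₂ ⟨(r : ℕ) - p₁, by have := r.isLt; omega⟩ c).index with
        | none => rw [hmem] at hidx; simp at hidx
        | some b =>
          rw [hmem] at hidx
          simp only [Option.map_some, Option.some.injEq] at hidx
          exact hsum.2.1 j' b hidx.symm
      have hout₂ : ∀ r, (¬ ∃ u, ρ₂ u = r) → ∀ c i, (G' r c).index = some i →
          i ∉ Set.range ι₂ := by
        intro r hr c i hidx
        have hge : (r : ℕ) < p₁ := by
          by_contra hlt
          refine hr ⟨⟨(r : ℕ) - p₁, by have := r.isLt; omega⟩, ?_⟩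
          apply Fin.ext
          show p₁ + ((r : ℕ) - p₁) = (r : ℕ)
          omega
        rw [hsum.apply_lt r c hge, CODEntry.index_mapIdx] at hidx
        rintro ⟨j', rfl⟩
        cases hmem : (G₁ ⟨(r : ℕ), hge⟩ c).index with
        | none => rw [hmem] at hidx; simp at hidx
        | some b =>
          rw [hmem] at hidx
          simp only [Option.map_some, Option.some.injEq] at hidx
          exact hsum.2.1 b j' hidx
      have hb₁ : IsBCOD G₁ := IsBCOD.component ι₁ ρ₁ hρ₁ hout₁ hG'b hc₁
      have hb₂ : IsBCOD G₂ := IsBCOD.component ι₂ ρ₂ hρ₂ hout₂ hG'b hc₂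
      obtain ⟨σ₁, hs₁⟩ := ih p₁ (by omega) G₁ hb₁
      obtain ⟨σ₂, hs₂⟩ := ih p₂ (by omega) G₂ hb₂
      set τ : Equiv.Perm (Fin (p₁ + p₂)) :=
        (finSumFinEquiv.symm.trans ((Equiv.sumCongr σ₁ σ₂).trans finSumFinEquiv))
        with hτdef
      refine ⟨τ.trans σ, ?_⟩
      refine hs₁.combine hs₂ rfl _ ι₁ ι₂ ⟨hsum.1, hsum.2.1, ?_⟩
      intro r c
      split
      · next h =>
        have hτr : τ r = ρ₁ (σ₁ ⟨(r : ℕ), h⟩) := by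
          have hrc : r = Fin.castAdd p₂ (⟨(r : ℕ), h⟩ : Fin p₁) := Fin.ext rfl
          rw [hτdef]
          simp only [Equiv.trans_apply]
          conv_lhs => rw [hrc]
          rw [finSumFinEquiv_symm_apply_castAdd]
          simp only [Equiv.sumCongr_apply, Sum.map_inl, finSumFinEquiv_apply_left]
          exact Fin.ext rfl
        show G' (τ r) c = _
        rw [hτr, hρ₁]
      · next h =>
        have hr2 : (r : ℕ) - p₁ < p₂ := by have := r.isLt; omega
        have hτr : τ r = ρ₂ (σ₂ ⟨(r : ℕ) - p₁, hr2⟩) := by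
          have hrc : r = Fin.natAdd p₁ (⟨(r : ℕ) - p₁, hr2⟩ : Fin p₂) :=
            Fin.ext (by simp; omega)
          rw [hτdef]
          simp only [Equiv.trans_apply]
          conv_lhs => rw [hrc]
          rw [finSumFinEquiv_symm_apply_natAdd]
          simp only [Equiv.sumCongr_apply, Sum.map_inr, finSumFinEquiv_apply_right]
          exact Fin.ext rfl
        show G' (τ r) c = _
        rw [hτr, hρ₂]
    · exact ⟨1, .single (by
        have h9 : (fun r c => G ((1 : Equiv.Perm (Fin p)) r) c) = G := rfl
        rw [h9]; exact hG) (by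
        have h9 : (fun r c => G ((1 : Equiv.Perm (Fin p)) r) c) = G := rfl
        rw [h9]; exact hdec)⟩

end Main

/-- every BCOD is, after a permutation of its rows, the direct sum of
finitely many indecomposable BCODs. -/
theorem bcod_decomposes_into_indecomposables {p m k : ℕ}
    (G : Matrix (Fin p) (Fin (m + m)) (CODEntry k)) (hG : IsBCOD G) :
    ∃ σ : Equiv.Perm (Fin p), SumOfIndecomposableBCODs (fun r c => G (σ r) c) :=
  bcod_aux p G hG
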